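/- arXiv:2105.00625 — 5 statements merged into one kernel-verified Lean document; each statement's English description precedes it below -/
import Mathlib

section
/- m_ℓ ≠ 0 for every ℓ ∈ {0,…,k−1} if and only if α ≥ β. (This is the correctness of the judge's decision rule in the semi-honest three-party comparison protocol.) -/
lemma sum_digits_lt (d k : ℕ) (hd : 1 ≤ d) (a : ℕ → ℕ) (ha : ∀ i < k, a i < d) :
    ∑ i ∈ Finset.range k, a i * d ^ i < d ^ k := by
  induction k with
  | zero => simp
  | succ n ih =>
    rw [Finset.sum_range_succ, pow_succ]
    have h1 : ∑ i ∈ Finset.range n, a i * d ^ i < d ^ n :=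
      ih (fun i hi => ha i (Nat.lt_succ_of_lt hi))
    have h2 : a n + 1 ≤ d := ha n (Nat.lt_succ_self n)
    have h3 : (a n + 1) * d ^ n ≤ d * d ^ n := Nat.mul_le_mul_right _ h2
    have h4 : a n * d ^ n + d ^ n = (a n + 1) * d ^ n := by ring
    have h5 : d ^ n * d = d * d ^ n := by ring
    omega

lemma lex_lt (d k : ℕ) (hd : 1 ≤ d) (a b : ℕ → ℕ) (ha : ∀ i < k, a i < d)
    (ℓ : ℕ) (hℓ : ℓ < k) (hdig : a ℓ < b ℓ)
    (htail : ∑ u ∈ Finset.Ico (ℓ + 1) k, a u * d ^ u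
      = ∑ u ∈ Finset.Ico (ℓ + 1) k, b u * d ^ u) :
    ∑ i ∈ Finset.range k, a i * d ^ i < ∑ i ∈ Finset.range k, b i * d ^ i := by
  have hsplit : ∀ f : ℕ → ℕ, ∑ i ∈ Finset.range k, f i * d ^ i
      = ((∑ i ∈ Finset.range ℓ, f i * d ^ i) + f ℓ * d ^ ℓ)
        + ∑ u ∈ Finset.Ico (ℓ + 1) k, f u * d ^ u := by
    intro f
    rw [Finset.range_eq_Ico, ← Finset.sum_Ico_consecutive _ (Nat.zero_le (ℓ + 1)) hℓ,
      ← Finset.range_eq_Ico, Finset.sum_range_succ]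
  rw [hsplit a, hsplit b, htail]
  have hlow := sum_digits_lt d ℓ hd a (fun i hi => ha i (hi.trans hℓ))
  have h1 : (a ℓ + 1) * d ^ ℓ ≤ b ℓ * d ^ ℓ := Nat.mul_le_mul_right _ hdig
  have h2 : a ℓ * d ^ ℓ + d ^ ℓ = (a ℓ + 1) * d ^ ℓ := by ring
  omega

lemma lex_iff (d k : ℕ) (hd : 1 ≤ d) (a b : ℕ → ℕ) (ha : ∀ i < k, a i < d)
    (hb : ∀ i < k, b i < d) :
    (∑ i ∈ Finset.range k, a i * d ^ i < ∑ i ∈ Finset.range k, b i * d ^ i) ↔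
      ∃ ℓ < k, a ℓ < b ℓ ∧ ∑ u ∈ Finset.Ico (ℓ + 1) k, a u * d ^ u
        = ∑ u ∈ Finset.Ico (ℓ + 1) k, b u * d ^ u := by
  constructor
  · intro hlt
    set D := (Finset.range k).filter (fun i => a i ≠ b i) with hD
    have hDne : D.Nonempty := by
      by_contra h
      rw [Finset.not_nonempty_iff_eq_empty] at h
      have heq : ∀ i ∈ Finset.range k, a i * d ^ i = b i * d ^ i := by
        intro i hi
        by_contra hne
        have hiD : i ∈ D := Finset.mem_filter.mpr ⟨hi, fun he => hne (by rw [he])⟩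
        simp [h] at hiD
      have := Finset.sum_congr rfl heq
      omega
    set ℓ := D.max' hDne with hℓdef
    have hℓD : ℓ ∈ D := D.max'_mem hDne
    rw [hD, Finset.mem_filter, Finset.mem_range] at hℓD
    obtain ⟨hℓk, hℓne⟩ := hℓD
    have htail : ∑ u ∈ Finset.Ico (ℓ + 1) k, a u * d ^ u
        = ∑ u ∈ Finset.Ico (ℓ + 1) k, b u * d ^ u := by
      apply Finset.sum_congr rfl
      intro u hu
      rw [Finset.mem_Ico] at hu
      by_contra hne
      have hne' : a u ≠ b u := fun he => hne (by rw [he])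
      have huD : u ∈ D := Finset.mem_filter.mpr ⟨Finset.mem_range.mpr hu.2, hne'⟩
      have := D.le_max' u huD
      omega
    rcases lt_trichotomy (a ℓ) (b ℓ) with h | h | h
    · exact ⟨ℓ, hℓk, h, htail⟩
    · exact absurd h hℓne
    · exact absurd (lex_lt d k hd b a hb ℓ hℓk h htail.symm) (by omega)
  · rintro ⟨ℓ, hℓ, hdig, htail⟩
    exact lex_lt d k hd a b ha ℓ hℓ hdig htail

/-- `m_ℓ ≠ 0` for every `ℓ ∈ {0,…,k−1}` iff `α ≥ β`, where
`m_ℓ = r_ℓ · r_ℓ' · (concat_ℓ(β, s_ℓ) − concat_ℓ(α, w_ℓ))`. -/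
theorem judge_decision_rule_correct
    (b d k : ℕ) (hb : 2 ≤ b) (hd : 2 ≤ d) (hk : 1 ≤ k)
    (α β : ℕ → ℕ) (hα : ∀ i < k, α i < d) (hβ : ∀ i < k, β i < d)
    (s : ℕ → ℕ) (hs : ∀ ℓ < k, 1 ≤ s ℓ ∧ s ℓ < b ^ d ∧ ¬ b ∣ s ℓ)
    (w : ℕ → ℕ) (hw : ∀ ℓ, w ℓ = (b ^ (d - α ℓ - 1 + β ℓ) + s ℓ) % b ^ d)
    (r r' : ℕ → ℤ) (hr : ∀ ℓ, r ℓ ≠ 0) (hr' : ∀ ℓ, r' ℓ ≠ 0)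
    (m : ℕ → ℤ)
    (hm : ∀ ℓ, m ℓ = r ℓ * r' ℓ *
      (((s ℓ + b ^ d * ∑ u ∈ Finset.Ico (ℓ + 1) k, β u * d ^ (u - (ℓ + 1)) : ℕ) : ℤ) -
       ((w ℓ + b ^ d * ∑ u ∈ Finset.Ico (ℓ + 1) k, α u * d ^ (u - (ℓ + 1)) : ℕ) : ℤ))) :
    (∀ ℓ < k, m ℓ ≠ 0) ↔
      (∑ i ∈ Finset.range k, β i * d ^ i) ≤ (∑ i ∈ Finset.range k, α i * d ^ i) := by
  have hbd : 1 < b ^ d := Nat.one_lt_pow (by omega) (by omega)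
  have hchar : ∀ ℓ < k, (m ℓ = 0 ↔ (α ℓ < β ℓ ∧
      ∑ u ∈ Finset.Ico (ℓ + 1) k, α u * d ^ u
        = ∑ u ∈ Finset.Ico (ℓ + 1) k, β u * d ^ u)) := by
    intro ℓ hℓ
    obtain ⟨hs1, hs2, _⟩ := hs ℓ hℓ
    have hw' := hw ℓ
    have hwlt : w ℓ < b ^ d := hw' ▸ Nat.mod_lt _ (by omega)
    have hrr : r ℓ * r' ℓ ≠ 0 := mul_ne_zero (hr ℓ) (hr' ℓ)
    have hmz : m ℓ = 0 ↔
        s ℓ + b ^ d * (∑ u ∈ Finset.Ico (ℓ + 1) k, β u * d ^ (u - (ℓ + 1)))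
          = w ℓ + b ^ d * (∑ u ∈ Finset.Ico (ℓ + 1) k, α u * d ^ (u - (ℓ + 1))) := by
      rw [hm ℓ, mul_eq_zero, sub_eq_zero, Nat.cast_inj]
      simp [hrr]
    have hconv : ∀ f : ℕ → ℕ,
        (∑ u ∈ Finset.Ico (ℓ + 1) k, f u * d ^ (u - (ℓ + 1))) * d ^ (ℓ + 1)
          = ∑ u ∈ Finset.Ico (ℓ + 1) k, f u * d ^ u := by
      intro f
      rw [Finset.sum_mul]
      apply Finset.sum_congr rfl
      intro u hu
      rw [Finset.mem_Ico] at hu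
      rw [mul_assoc, ← pow_add]
      congr 2
      omega
    have hαℓ := hα ℓ hℓ
    rcases Nat.lt_or_ge (α ℓ) (β ℓ) with hcase | hcase
    · -- α ℓ < β ℓ : w ℓ = s ℓ
      have he : d ≤ d - α ℓ - 1 + β ℓ := by omega
      have hwval : w ℓ = s ℓ := by
        obtain ⟨t, ht⟩ : b ^ d ∣ b ^ (d - α ℓ - 1 + β ℓ) := pow_dvd_pow b he
        rw [hw', ht, Nat.mul_add_mod, Nat.mod_eq_of_lt hs2]
      rw [hmz, hwval]
      constructor
      · intro h
        refine ⟨hcase, ?_⟩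
        have hmm : b ^ d * (∑ u ∈ Finset.Ico (ℓ + 1) k, β u * d ^ (u - (ℓ + 1)))
            = b ^ d * (∑ u ∈ Finset.Ico (ℓ + 1) k, α u * d ^ (u - (ℓ + 1))) := by omega
        have hT := Nat.eq_of_mul_eq_mul_left (show 0 < b ^ d by omega) hmm
        rw [← hconv α, ← hconv β, hT]
      · rintro ⟨_, hT⟩
        have hT' : (∑ u ∈ Finset.Ico (ℓ + 1) k, α u * d ^ (u - (ℓ + 1)))
            = ∑ u ∈ Finset.Ico (ℓ + 1) k, β u * d ^ (u - (ℓ + 1)) := by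
          apply Nat.eq_of_mul_eq_mul_right (show 0 < d ^ (ℓ + 1) by positivity)
          rw [hconv α, hconv β, hT]
        rw [hT']
    · -- β ℓ ≤ α ℓ : m ℓ ≠ 0
      have hed : d - α ℓ - 1 + β ℓ < d := by omega
      have hblt : b ^ (d - α ℓ - 1 + β ℓ) < b ^ d :=
        Nat.pow_lt_pow_right (by omega) hed
      have hbpos : 0 < b ^ (d - α ℓ - 1 + β ℓ) := Nat.pow_pos (by omega)
      have hne : s ℓ ≠ w ℓ := by
        intro heq
        rw [hw'] at heq
        rcases Nat.lt_or_ge (b ^ (d - α ℓ - 1 + β ℓ) + s ℓ) (b ^ d) with h | h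
        · rw [Nat.mod_eq_of_lt h] at heq; omega
        · rw [Nat.mod_eq_sub_mod h,
            Nat.mod_eq_of_lt (by omega)] at heq
          omega
      constructor
      · intro h
        exfalso
        have heq := hmz.mp h
        have h1 := congrArg (· % b ^ d) heq
        simp only [Nat.add_mul_mod_self_left] at h1
        rw [Nat.mod_eq_of_lt hs2, Nat.mod_eq_of_lt hwlt] at h1
        exact hne h1
      · rintro ⟨h, _⟩; omega
  have hlex := lex_iff d k (by omega) α β hα hβ
  rw [← Nat.not_lt, hlex]
  constructor
  · rintro h ⟨ℓ, hℓ, h1, h2⟩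
    exact h ℓ hℓ ((hchar ℓ hℓ).mpr ⟨h1, h2⟩)
  · intro h ℓ hℓ hm0
    exact h ⟨ℓ, hℓ, (hchar ℓ hℓ).mp hm0⟩
end

section
/- The exclusive-or F = T_1 ⊕ T_2 ⊕ ⋯ ⊕ T_η equals 1 if and only if α > β; equivalently, the number of indices ℓ with T_ℓ true is odd if and only if α > β. -/
lemma fc_pow2_sum (η : ℕ) : ∑ ℓ ∈ Finset.Icc 1 η, 2 ^ (ℓ - 1) = 2 ^ η - 1 := by
  induction η with
  | zero => simp
  | succ η ih =>
    rw [Finset.sum_Icc_succ_top (by omega : 1 ≤ η + 1), ih]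
    have : 1 ≤ 2 ^ η := Nat.one_le_two_pow
    simp only [Nat.add_sub_cancel]
    rw [pow_succ]
    omega

lemma fc_bound (η : ℕ) (a : ℕ → Bool) :
    (∑ ℓ ∈ Finset.Icc 1 η, (if a ℓ = true then 1 else 0) * 2 ^ (ℓ - 1)) ≤ 2 ^ η - 1 := by
  calc (∑ ℓ ∈ Finset.Icc 1 η, (if a ℓ = true then 1 else 0) * 2 ^ (ℓ - 1))
      ≤ ∑ ℓ ∈ Finset.Icc 1 η, 2 ^ (ℓ - 1) := by
        apply Finset.sum_le_sum
        intro i _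
        split <;> simp
    _ = 2 ^ η - 1 := fc_pow2_sum η

lemma fc_key (a b : ℕ → Bool) (η : ℕ) :
    (∑ ℓ ∈ Finset.Icc 1 η, (if a ℓ = true then 1 else 0) * 2 ^ (ℓ - 1)) >
      (∑ ℓ ∈ Finset.Icc 1 η, (if b ℓ = true then 1 else 0) * 2 ^ (ℓ - 1)) ↔
    ∃ ℓ ∈ Finset.Icc 1 η, a ℓ = true ∧ b ℓ = false ∧ ∀ u ∈ Finset.Ioc ℓ η, a u = b u := by
  induction η with
  | zero => simp
  | succ η ih =>
    have hsA := Finset.sum_Icc_succ_top (by omega : 1 ≤ η + 1)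
      (fun ℓ => (if a ℓ = true then 1 else 0) * 2 ^ (ℓ - 1))
    have hsB := Finset.sum_Icc_succ_top (by omega : 1 ≤ η + 1)
      (fun ℓ => (if b ℓ = true then 1 else 0) * 2 ^ (ℓ - 1))
    have hbA := fc_bound η a
    have hbB := fc_bound η b
    have h1 : 1 ≤ 2 ^ η := Nat.one_le_two_pow
    rw [hsA, hsB]
    simp only [Nat.add_sub_cancel]
    cases ha : a (η + 1) <;> cases hb : b (η + 1)
    · -- a = false, b = false
      simp only [Bool.false_eq_true, eq_self_iff_true, if_true, if_false, ite_true, ite_false, zero_mul, one_mul, add_zero]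
      rw [ih]
      constructor
      · rintro ⟨ℓ, hℓ, h1, h2, h3⟩
        rcases Finset.mem_Icc.mp hℓ with ⟨hℓ1, hℓ2⟩
        refine ⟨ℓ, Finset.mem_Icc.mpr ⟨hℓ1, by omega⟩, h1, h2, ?_⟩
        intro u hu
        rcases Finset.mem_Ioc.mp hu with ⟨hu1, hu2⟩
        rcases Nat.lt_or_ge u (η + 1) with h | h
        · exact h3 u (Finset.mem_Ioc.mpr ⟨hu1, by omega⟩)
        · have : u = η + 1 := by omega
          rw [this, ha, hb]
      · rintro ⟨ℓ, hℓ, h1, h2, h3⟩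
        rcases Finset.mem_Icc.mp hℓ with ⟨hℓ1, hℓ2⟩
        have hℓη : ℓ ≤ η := by
          rcases Nat.lt_or_ge ℓ (η + 1) with h | h
          · omega
          · exfalso
            have : ℓ = η + 1 := by omega
            rw [this, ha] at h1
            exact absurd h1 (by simp)
        refine ⟨ℓ, Finset.mem_Icc.mpr ⟨hℓ1, hℓη⟩, h1, h2, ?_⟩
        intro u hu
        rcases Finset.mem_Ioc.mp hu with ⟨hu1, hu2⟩
        exact h3 u (Finset.mem_Ioc.mpr ⟨hu1, by omega⟩)
    · -- a = false, b = true : both sides false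
      simp only [Bool.false_eq_true, eq_self_iff_true, if_true, if_false, ite_true, ite_false, zero_mul, one_mul, add_zero]
      constructor
      · intro h; exfalso; omega
      · rintro ⟨ℓ, hℓ, h2, h3, h4⟩
        exfalso
        rcases Finset.mem_Icc.mp hℓ with ⟨hℓ1, hℓ2⟩
        rcases Nat.lt_or_ge ℓ (η + 1) with h | h
        · have := h4 (η + 1) (Finset.mem_Ioc.mpr ⟨by omega, le_refl _⟩)
          rw [ha, hb] at this; exact absurd this (by simp)
        · have : ℓ = η + 1 := by omega
          rw [this, ha] at h2; exact absurd h2 (by simp)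
    · -- a = true, b = false : both sides true
      simp only [Bool.false_eq_true, eq_self_iff_true, if_true, if_false, ite_true, ite_false, zero_mul, one_mul, add_zero]
      constructor
      · intro _
        exact ⟨η + 1, Finset.mem_Icc.mpr ⟨by omega, le_refl _⟩, ha, hb, by simp⟩
      · intro _; omega
    · -- a = true, b = true
      simp only [Bool.false_eq_true, eq_self_iff_true, if_true, if_false, ite_true, ite_false, zero_mul, one_mul, add_zero]
      rw [gt_iff_lt, add_lt_add_iff_right, ← gt_iff_lt, ih]
      constructor
      · rintro ⟨ℓ, hℓ, h1, h2, h3⟩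
        rcases Finset.mem_Icc.mp hℓ with ⟨hℓ1, hℓ2⟩
        refine ⟨ℓ, Finset.mem_Icc.mpr ⟨hℓ1, by omega⟩, h1, h2, ?_⟩
        intro u hu
        rcases Finset.mem_Ioc.mp hu with ⟨hu1, hu2⟩
        rcases Nat.lt_or_ge u (η + 1) with h | h
        · exact h3 u (Finset.mem_Ioc.mpr ⟨hu1, by omega⟩)
        · have : u = η + 1 := by omega
          rw [this, ha, hb]
      · rintro ⟨ℓ, hℓ, h1, h2, h3⟩
        rcases Finset.mem_Icc.mp hℓ with ⟨hℓ1, hℓ2⟩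
        have hℓη : ℓ ≤ η := by
          rcases Nat.lt_or_ge ℓ (η + 1) with h | h
          · omega
          · exfalso
            have : ℓ = η + 1 := by omega
            rw [this, hb] at h2
            exact absurd h2 (by simp)
        refine ⟨ℓ, Finset.mem_Icc.mpr ⟨hℓ1, hℓη⟩, h1, h2, ?_⟩
        intro u hu
        rcases Finset.mem_Ioc.mp hu with ⟨hu1, hu2⟩
        exact h3 u (Finset.mem_Ioc.mpr ⟨hu1, by omega⟩)

lemma fc_card_le_one (η : ℕ) (a b : ℕ → Bool) :
    ((Finset.Icc 1 η).filter
      (fun ℓ => a ℓ = true ∧ b ℓ = false ∧ ∀ u ∈ Finset.Ioc ℓ η, a u = b u)).card ≤ 1 := by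
  rw [Finset.card_le_one]
  intro x hx y hy
  rcases Finset.mem_filter.mp hx with ⟨hx1, hxa, hxb, hxall⟩
  rcases Finset.mem_filter.mp hy with ⟨hy1, hya, hyb, hyall⟩
  rcases Finset.mem_Icc.mp hx1 with ⟨hx2, hx3⟩
  rcases Finset.mem_Icc.mp hy1 with ⟨hy2, hy3⟩
  by_contra hne
  rcases Nat.lt_or_ge x y with h | h
  · have := hxall y (Finset.mem_Ioc.mpr ⟨h, hy3⟩)
    rw [hya, hyb] at this; exact absurd this (by simp)
  · have hxy : y < x := by omega
    have := hyall x (Finset.mem_Ioc.mpr ⟨hxy, hx3⟩)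
    rw [hxa, hxb] at this; exact absurd this (by simp)

/-- the exclusive-or `F = T_1 ⊕ ⋯ ⊕ T_η` (computed as a sum in
`ZMod 2`) equals `1` iff `α > β`; equivalently the number of indices `ℓ` with
`T_ℓ` true is odd iff `α > β`. -/
theorem fischlin_circuit_correct
    (η : ℕ) (hη : 1 ≤ η) (a b : ℕ → Bool)
    (A B : ℕ)
    (hA : A = ∑ ℓ ∈ Finset.Icc 1 η, (if a ℓ = true then 1 else 0) * 2 ^ (ℓ - 1))
    (hB : B = ∑ ℓ ∈ Finset.Icc 1 η, (if b ℓ = true then 1 else 0) * 2 ^ (ℓ - 1)) :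
    ((∑ ℓ ∈ Finset.Icc 1 η,
        (if a ℓ = true ∧ b ℓ = false ∧ ∀ u ∈ Finset.Ioc ℓ η, a u = b u
          then (1 : ZMod 2) else 0)) = 1 ↔ A > B) ∧
    (Odd ((Finset.Icc 1 η).filter
        (fun ℓ => a ℓ = true ∧ b ℓ = false ∧ ∀ u ∈ Finset.Ioc ℓ η, a u = b u)).card
      ↔ A > B) := by
  set S := (Finset.Icc 1 η).filter
      (fun ℓ => a ℓ = true ∧ b ℓ = false ∧ ∀ u ∈ Finset.Ioc ℓ η, a u = b u) with hS
  have hcard : S.card ≤ 1 := fc_card_le_one η a b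
  have hkey : S.Nonempty ↔ A > B := by
    rw [hA, hB]
    constructor
    · rintro ⟨x, hx⟩
      rcases Finset.mem_filter.mp hx with ⟨h1, h2, h3, h4⟩
      exact (fc_key a b η).mpr ⟨x, h1, h2, h3, h4⟩
    · intro h
      rcases (fc_key a b η).mp h with ⟨ℓ, h1, h2, h3, h4⟩
      exact ⟨ℓ, Finset.mem_filter.mpr ⟨h1, h2, h3, h4⟩⟩
  have hsum : (∑ ℓ ∈ Finset.Icc 1 η,
        (if a ℓ = true ∧ b ℓ = false ∧ ∀ u ∈ Finset.Ioc ℓ η, a u = b u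
          then (1 : ZMod 2) else 0)) = (S.card : ZMod 2) := by
    rw [hS, Finset.sum_boole]
  have hcard1 : S.card = 1 ↔ A > B := by
    rw [← hkey, ← Finset.card_pos]
    omega
  constructor
  · rw [hsum, ← hcard1]
    constructor
    · intro h
      interval_cases h' : S.card
      · exfalso; simp at h
      · rfl
    · intro h; simp [h]
  · rw [← hcard1]
    constructor
    · rintro ⟨k, hk⟩
      omega
    · intro h; rw [h]; exact odd_one
end

section
/- For every integer r coprime to n and every bit b ∈ {0,1}, one has (r²·(−1)^b)^{(p−1)(q−1)/4} ≡ (−1)^b (mod n). Consequently Goldwasser–Micali decryption with the private key sk = (p−1)(q−1)/4 correctly recovers the encrypted bit. -/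
/-- Auxiliary: the CRT equivalence applied to `x` is the pair of castHom images. -/
lemma gm_crt_apply (p q : ℕ) (hp : p.Prime) (hq : q.Prime) (hcop : Nat.Coprime p q)
    (x : ZMod (p * q)) :
    (ZMod.chineseRemainder hcop) x =
        ((ZMod.castHom (dvd_mul_right p q) (ZMod p)) x,
         (ZMod.castHom (dvd_mul_left q p) (ZMod q)) x) := by
  haveI : NeZero (p * q) := ⟨Nat.mul_ne_zero hp.pos.ne' hq.pos.ne'⟩
  simp only [ZMod.chineseRemainder, RingEquiv.coe_mk, Equiv.coe_fn_mk, ZMod.castHom_apply]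
  have h : (ZMod.cast x : ZMod p × ZMod q) = ((x.val : ZMod p), (x.val : ZMod q)) := by
    rw [← ZMod.natCast_val x]; rfl
  rw [h]
  exact Prod.ext (by simp [ZMod.natCast_val]) (by simp [ZMod.natCast_val])

/-- for every unit `r` of `ℤ/nℤ` (with `n = p·q`, `p ≡ q ≡ 3 (mod 4)`
distinct primes) and every bit `b ∈ {0,1}`:
`(r²·(−1)^b)^{(p−1)(q−1)/4} = (−1)^b`, so GM decryption with
`sk = (p−1)(q−1)/4` recovers the bit. -/
theorem gm_decryption_correct
    (p q : ℕ) (hp : p.Prime) (hq : q.Prime) (hpq : p ≠ q)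
    (hp4 : p % 4 = 3) (hq4 : q % 4 = 3)
    (r : (ZMod (p * q))ˣ) (b : ℕ) (hb : b ≤ 1) :
    ((r : ZMod (p * q)) ^ 2 * (-1) ^ b) ^ ((p - 1) * (q - 1) / 4) = (-1) ^ b := by
  have hk : p - 1 = 2 * ((p - 1) / 2) ∧ ((p - 1) / 2) % 2 = 1 := by omega
  have hl : q - 1 = 2 * ((q - 1) / 2) ∧ ((q - 1) / 2) % 2 = 1 := by omega
  set k := (p - 1) / 2 with hkdef
  set l := (q - 1) / 2 with hldef
  have hexp : (p - 1) * (q - 1) / 4 = k * l := by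
    rw [hk.1, hl.1]; ring_nf; omega
  have hcop : Nat.Coprime p q := (Nat.coprime_primes hp hq).mpr hpq
  haveI : Fact p.Prime := ⟨hp⟩
  haveI : Fact q.Prime := ⟨hq⟩
  have key : (r : ZMod (p * q)) ^ (2 * (k * l)) = 1 := by
    apply (ZMod.chineseRemainder hcop).injective
    rw [map_pow, map_one, gm_crt_apply p q hp hq hcop, Prod.pow_mk, Prod.mk_eq_one]
    constructor
    · have hu : IsUnit ((ZMod.castHom (dvd_mul_right p q) (ZMod p)) (r : ZMod (p*q))) :=
        (Units.map (ZMod.castHom (dvd_mul_right p q) (ZMod p)).toMonoidHom r).isUnit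
      have h2 : 2 * (k * l) = (p - 1) * l := by rw [hk.1]; ring
      rw [h2, pow_mul, ZMod.pow_card_sub_one_eq_one hu.ne_zero, one_pow]
    · have hu : IsUnit ((ZMod.castHom (dvd_mul_left q p) (ZMod q)) (r : ZMod (p*q))) :=
        (Units.map (ZMod.castHom (dvd_mul_left q p) (ZMod q)).toMonoidHom r).isUnit
      have h2 : 2 * (k * l) = (q - 1) * k := by rw [hl.1]; ring
      rw [h2, pow_mul, ZMod.pow_card_sub_one_eq_one hu.ne_zero, one_pow]
  have hodd : Odd (k * l) := (Nat.odd_iff.2 hk.2).mul (Nat.odd_iff.2 hl.2)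
  rw [hexp, mul_pow, ← pow_mul, key, one_mul]
  interval_cases b
  · simp
  · simp [hodd.neg_one_pow]
end

section
/- Let D(b) be the distribution on plaintext vectors Fin ι → Bool of an AND-encryption of the bit b: D(true) is the point mass on the all-false vector and D(false) is the uniform distribution on Fin ι → Bool. If v₁ ∼ D(b₁) and v₂ ∼ D(b₂) are sampled independently, then the probability that the all-false test of the pointwise exclusive-or, i.e. the Boolean value (∀ i, xor (v₁ i) (v₂ i) = false), equals b₁ ∧ b₂ is at least 1 − (1/2)^ι; it equals 1 when b₁ = b₂ = true. (This is the correctness of the AND-homomorphism Enc^{AND}(b₁)·Enc^{AND}(b₂) = Enc^{AND}(b₁ ∧ b₂).) -/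
open scoped ENNReal

private lemma joint_apply {α : Type*} (p q : PMF α) (x : α × α) :
    (p.bind fun a => q.bind fun b => PMF.pure (a, b)) x = p x.1 * q x.2 := by
  classical
  obtain ⟨x1, x2⟩ := x
  simp only [PMF.bind_apply, PMF.pure_apply]
  rw [tsum_eq_single x1, tsum_eq_single x2]
  · simp
  · intro b hb
    simp [Prod.ext_iff, hb.symm]
  · intro a ha
    refine mul_eq_zero.mpr (Or.inr ?_)
    rw [ENNReal.tsum_eq_zero]
    intro b
    simp [Prod.ext_iff, ha.symm]

private lemma diag_measure {α : Type*} [Fintype α] (p q : PMF α) :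
    (p.bind fun a => q.bind fun b => PMF.pure (a, b)).toOuterMeasure
      {x : α × α | x.1 = x.2} = ∑ a, p a * q a := by
  classical
  rw [PMF.toOuterMeasure_apply_fintype]
  rw [Fintype.sum_prod_type]
  refine Finset.sum_congr rfl fun a _ => ?_
  rw [Finset.sum_eq_single a]
  · rw [Set.indicator_of_mem (by simp) _, joint_apply]
  · intro b _ hb
    rw [Set.indicator_of_notMem (by simpa using fun h => (hb h.symm).elim)]
  · simp

/-- with `D true` the point mass on the all-`false` vector and
`D false` uniform on `Fin ι → Bool`, for independent `v₁ ∼ D b₁`, `v₂ ∼ D b₂`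
the probability that the all-false test of the pointwise XOR equals `b₁ ∧ b₂`
is at least `1 − (1/2)^ι`, and equals `1` when `b₁ = b₂ = true`. -/
theorem and_homomorphism_correct
    (ι : ℕ) (hι : 1 ≤ ι)
    (D : Bool → PMF (Fin ι → Bool))
    (hDtrue : D true = PMF.pure (fun _ => false))
    (hDfalse : D false = PMF.uniformOfFintype (Fin ι → Bool))
    (b₁ b₂ : Bool) :
    (1 - (1 / 2 : ℝ≥0∞) ^ ι ≤
      ((D b₁).bind fun v₁ => (D b₂).bind fun v₂ => PMF.pure (v₁, v₂)).toOuterMeasure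
        {v : (Fin ι → Bool) × (Fin ι → Bool) |
          decide (∀ i, xor (v.1 i) (v.2 i) = false) = (b₁ && b₂)}) ∧
    (b₁ = true → b₂ = true →
      ((D b₁).bind fun v₁ => (D b₂).bind fun v₂ => PMF.pure (v₁, v₂)).toOuterMeasure
        {v : (Fin ι → Bool) × (Fin ι → Bool) |
          decide (∀ i, xor (v.1 i) (v.2 i) = false) = (b₁ && b₂)} = 1) := by
  classical
  set p := ((D b₁).bind fun v₁ => (D b₂).bind fun v₂ => PMF.pure (v₁, v₂)) with hp
  set S := {v : (Fin ι → Bool) × (Fin ι → Bool) |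
      decide (∀ i, xor (v.1 i) (v.2 i) = false) = (b₁ && b₂)} with hS
  have hcard : (Fintype.card (Fin ι → Bool) : ℝ≥0∞) = 2 ^ ι := by
    simp [Fintype.card_fun]
  have hhalf : (1 / 2 : ℝ≥0∞) ^ ι = ((2 : ℝ≥0∞) ^ ι)⁻¹ := by
    rw [one_div, ← ENNReal.inv_pow]
  have htrue : b₁ = true → b₂ = true → p.toOuterMeasure S = 1 := by
    intro h1 h2
    subst h1; subst h2
    rw [PMF.toOuterMeasure_apply_eq_one_iff]
    intro x hx
    have : p = PMF.pure ((fun _ => false), (fun _ => false)) := by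
      rw [hp, hDtrue]; simp [PMF.pure_bind]
    rw [this] at hx
    simp only [PMF.support_pure, Set.mem_singleton_iff] at hx
    subst hx
    simp [hS]
  refine ⟨?_, htrue⟩
  by_cases hb : b₁ = true ∧ b₂ = true
  · rw [htrue hb.1 hb.2]; exact tsub_le_self
  · have hband : (b₁ && b₂) = false := by
      rcases Bool.eq_false_or_eq_true b₁ with h | h <;>
        rcases Bool.eq_false_or_eq_true b₂ with h' | h' <;> simp_all
    have hcompl : Sᶜ ⊆ {x : (Fin ι → Bool) × (Fin ι → Bool) | x.1 = x.2} := by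
      intro x hx
      simp only [hS, Set.mem_compl_iff, Set.mem_setOf_eq, hband] at hx
      have hx' : decide (∀ i, xor (x.1 i) (x.2 i) = false) = true := by
        revert hx; cases h : decide (∀ i, xor (x.1 i) (x.2 i) = false) <;> simp
      have hall := of_decide_eq_true hx'
      funext i
      have := hall i
      revert this
      cases x.1 i <;> cases x.2 i <;> simp
    have hdiag : p.toOuterMeasure {x : (Fin ι → Bool) × (Fin ι → Bool) | x.1 = x.2}
        ≤ (1 / 2 : ℝ≥0∞) ^ ι := by
      rw [hp, diag_measure, hhalf]
      rcases Bool.eq_false_or_eq_true b₁ with h1 | h1 <;>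
        rcases Bool.eq_false_or_eq_true b₂ with h2 | h2
      · exact absurd ⟨h1, h2⟩ hb
      · subst h1; subst h2
        rw [hDtrue, hDfalse]
        rw [Finset.sum_eq_single (fun _ => false : Fin ι → Bool)]
        · rw [PMF.pure_apply, if_pos rfl, one_mul, PMF.uniformOfFintype_apply, hcard]
        · intro b _ hbne
          rw [PMF.pure_apply, if_neg hbne, zero_mul]
        · simp
      · subst h1; subst h2
        rw [hDtrue, hDfalse]
        rw [Finset.sum_eq_single (fun _ => false : Fin ι → Bool)]
        · rw [PMF.pure_apply, if_pos rfl, mul_one, PMF.uniformOfFintype_apply, hcard]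
        · intro b _ hbne
          rw [PMF.pure_apply, if_neg hbne, mul_zero]
        · simp
      · subst h1; subst h2
        rw [hDfalse]
        refine le_of_eq ?_
        calc ∑ a, (PMF.uniformOfFintype (Fin ι → Bool)) a *
              (PMF.uniformOfFintype (Fin ι → Bool)) a
            = ∑ _a : Fin ι → Bool, ((2:ℝ≥0∞)^ι)⁻¹ * ((2:ℝ≥0∞)^ι)⁻¹ := by
              refine Finset.sum_congr rfl fun a _ => ?_
              rw [PMF.uniformOfFintype_apply, hcard]
          _ = (2:ℝ≥0∞)^ι * (((2:ℝ≥0∞)^ι)⁻¹ * ((2:ℝ≥0∞)^ι)⁻¹) := by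
              rw [Finset.sum_const, Finset.card_univ, nsmul_eq_mul, hcard]
          _ = ((2:ℝ≥0∞)^ι)⁻¹ := by
              rw [← mul_assoc, ENNReal.mul_inv_cancel (by positivity) (by simp), one_mul]
    have hSc : p.toOuterMeasure Sᶜ ≤ (1 / 2 : ℝ≥0∞) ^ ι :=
      le_trans (p.toOuterMeasure.mono hcompl) hdiag
    have huniv : p.toOuterMeasure Set.univ = 1 := by
      rw [PMF.toOuterMeasure_apply]
      simpa using p.tsum_coe
    have hsub : (1 : ℝ≥0∞) ≤ p.toOuterMeasure Sᶜ + p.toOuterMeasure S := by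
      calc (1 : ℝ≥0∞) = p.toOuterMeasure Set.univ := huniv.symm
        _ = p.toOuterMeasure (Sᶜ ∪ S) := by rw [Set.compl_union_self]
        _ ≤ p.toOuterMeasure Sᶜ + p.toOuterMeasure S := MeasureTheory.measure_union_le Sᶜ S
    calc 1 - (1/2:ℝ≥0∞)^ι ≤ 1 - p.toOuterMeasure Sᶜ := tsub_le_tsub_left hSc 1
      _ ≤ p.toOuterMeasure S := tsub_le_iff_left.mpr hsub
end

section
/- Fix a bit b and sample a : Fin ι → Bool uniformly at random; define the plaintext vector e : Fin ι → Bool of the AND-embedding by e i = false if a i = true, and e i = ¬b if a i = false. Then the probability that the AND-decryption result (∀ i, e i = false) equals b is at least 1 − (1/2)^ι; it equals 1 when b = true and equals 1 − (1/2)^ι when b = false. (This is the correctness of embedding an existing GM ciphertext of b into an AND-homomorphic ciphertext without decryption.) -/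
open scoped ENNReal

/-- Auxiliary: uniform PMF measure of the complement of a singleton. -/
lemma uniform_compl_singleton (ι : ℕ) (x : Fin ι → Bool) :
    (PMF.uniformOfFintype (Fin ι → Bool)).toOuterMeasure ({x}ᶜ) = 1 - (1/2:ℝ≥0∞)^ι := by
  set p := PMF.uniformOfFintype (Fin ι → Bool) with hp
  have hfin := PMF.toOuterMeasure_apply_fintype p ({x}ᶜ)
  have hind : ∑ a : Fin ι → Bool, ({x}ᶜ : Set _).indicator p a
      = ∑ a ∈ Finset.univ.erase x, p a := by
    rw [← Finset.sum_erase_add _ _ (Finset.mem_univ x)]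
    simp [Set.indicator_apply]
    exact Finset.sum_congr rfl fun a ha => by
      simp [Set.indicator_apply, Finset.mem_erase.mp ha |>.1]
  have htot : p x + ∑ a ∈ Finset.univ.erase x, p a = 1 := by
    rw [Finset.add_sum_erase _ _ (Finset.mem_univ x), ← tsum_fintype (L := SummationFilter.unconditional _)]
    exact p.tsum_coe
  have herase : ∑ a ∈ Finset.univ.erase x, p a = 1 - p x := by
    refine ENNReal.eq_sub_of_add_eq (PMF.apply_ne_top p x) ?_
    rw [add_comm]; exact htot
  have hpx : p x = (1/2:ℝ≥0∞)^ι := by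
    rw [hp, PMF.uniformOfFintype_apply]
    simp [ENNReal.inv_pow, one_div]
  rw [hfin, hind, herase, hpx]

/-- fix a bit `b`, sample `a : Fin ι → Bool` uniformly, and let the
AND-embedding plaintext vector be `e i = false` if `a i = true` and `e i = ¬b`
otherwise. The probability that AND-decryption `(∀ i, e i = false)` equals `b`
is at least `1 − (1/2)^ι`; it is `1` if `b = true` and `1 − (1/2)^ι` if
`b = false`. -/
theorem and_embedding_correct
    (ι : ℕ) (hι : 1 ≤ ι) (b : Bool) :
    (1 - (1 / 2 : ℝ≥0∞) ^ ι ≤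
      (PMF.uniformOfFintype (Fin ι → Bool)).toOuterMeasure
        {a | decide (∀ i, (if a i then false else !b) = false) = b}) ∧
    (b = true →
      (PMF.uniformOfFintype (Fin ι → Bool)).toOuterMeasure
        {a | decide (∀ i, (if a i then false else !b) = false) = b} = 1) ∧
    (b = false →
      (PMF.uniformOfFintype (Fin ι → Bool)).toOuterMeasure
        {a | decide (∀ i, (if a i then false else !b) = false) = b} =
        1 - (1 / 2 : ℝ≥0∞) ^ ι) := by
  cases b with
  | true =>
    have hset : {a : Fin ι → Bool |
        decide (∀ i, (if a i then false else !true) = false) = true} = Set.univ := by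
      ext a; simp
    rw [hset]
    have h1 : (PMF.uniformOfFintype (Fin ι → Bool)).toOuterMeasure Set.univ = 1 := by
      rw [PMF.toOuterMeasure_apply, Set.indicator_univ]
      exact PMF.tsum_coe _
    refine ⟨?_, fun _ => h1, fun h => by simp at h⟩
    rw [h1]; exact tsub_le_self
  | false =>
    have hset : {a : Fin ι → Bool |
        decide (∀ i, (if a i then false else !false) = false) = false}
        = ({fun _ => true} : Set (Fin ι → Bool))ᶜ := by
      ext a
      simp only [Set.mem_setOf_eq, Set.mem_compl_iff, Set.mem_singleton_iff,
        decide_eq_false_iff_not, funext_iff]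
      constructor
      · intro h hall
        exact h fun i => by simp [hall i]
      · intro h hall
        exact h fun i => by have := hall i; by_contra hc; simp [hc] at this
    rw [hset, uniform_compl_singleton]
    exact ⟨le_refl _, fun h => by simp at h, fun _ => rfl⟩
end
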